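/- For every integer m ≥ 4, with Q_m(X) = X^{m-3}(X³ − X − 1) − (X³ + X² − 1) ∈ ℤ[X]: Φ₂(X) = X + 1 divides Q_m if and only if m ≡ 1 (mod 2); Φ₈(X) = X⁴ + 1 divides Q_m if and only if m ≡ 2 (mod 8); Φ₁₂(X) = X⁴ − X² + 1 divides Q_m if and only if m ≡ 1 (mod 12); Φ₁₈(X) = X⁶ − X³ + 1 divides Q_m if and only if m ≡ 17 (mod 18); and Φ₃₀(X) = X⁸ + X⁷ − X⁵ − X⁴ − X³ + X + 1 divides Q_m if and only if m ≡ 24 (mod 30). -/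
import Mathlib


open Polynomial

/-- For `m ≥ 4`, define `Q_m(X) = X ^ (m - 3) * (X ^ 3 - X - 1) - (X ^ 3 + X ^ 2 - 1) ∈ ℤ[X]`. -/
noncomputable def Qm (m : ℕ) : Polynomial ℤ :=
  X ^ (m - 3) * (X ^ 3 - X - 1) - (X ^ 3 + X ^ 2 - 1)

/-- The "reduced" version of `Qm` where the exponent is an arbitrary natural number. -/
noncomputable def Pr (r : ℕ) : Polynomial ℤ :=
  X ^ r * (X ^ 3 - X - 1) - (X ^ 3 + X ^ 2 - 1)

/-- If `Φ ∣ X ^ N - 1`, then divisibility of `Qm m` by `Φ` only depends on `(m - 3) % N`. -/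
lemma reduce (N : ℕ) (Φ : Polynomial ℤ) (hΦ : Φ ∣ X ^ N - 1) (m : ℕ) :
    (Φ ∣ Qm m) ↔ Φ ∣ Pr ((m - 3) % N) := by
  set k := (m - 3) / N with hk
  set r := (m - 3) % N with hr
  have h1 : m - 3 = N * k + r := (Nat.div_add_mod _ _).symm
  have hd : Φ ∣ Qm m - Pr r := by
    have h2 : Qm m - Pr r = ((X ^ N) ^ k - 1) * (X ^ r * (X ^ 3 - X - 1)) := by
      rw [Qm, Pr, h1]; ring
    rw [h2]
    exact ((hΦ.trans (by simpa using sub_dvd_pow_sub_pow (X ^ N : Polynomial ℤ) 1 k))).mul_right _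
  exact ⟨fun h => by simpa using dvd_sub h hd, fun h => by simpa using dvd_add h hd⟩

/-- Abstract form of each conjunct of the main theorem. -/
lemma main_part (N t r0 : ℕ) (hN : 0 < N) (Φ : Polynomial ℤ) (hΦ : Φ ∣ X ^ N - 1)
    (hdvd : Φ ∣ Pr r0)
    (hnot : ∀ r < N, r ≠ r0 → ¬ Φ ∣ Pr r)
    (m : ℕ) (ht : m % N = t ↔ (m - 3) % N = r0) :
    (Φ ∣ Qm m) ↔ m % N = t := by
  rw [reduce N Φ hΦ m, ht]
  constructor
  · intro h
    by_contra hne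
    exact hnot _ (Nat.mod_lt _ hN) hne h
  · intro h
    rw [h]
    exact hdvd

/-- Divisibility of `Q_m` by the cyclotomic polynomials `Φ₂, Φ₈, Φ₁₂, Φ₁₈, Φ₃₀` is
characterized by congruence conditions on `m`. -/
theorem cyclotomic_dvd_Qm_iff (m : ℕ) (hm : 4 ≤ m) :
    (((X + 1 : Polynomial ℤ) ∣ Qm m) ↔ m % 2 = 1) ∧
    (((X ^ 4 + 1 : Polynomial ℤ) ∣ Qm m) ↔ m % 8 = 2) ∧
    (((X ^ 4 - X ^ 2 + 1 : Polynomial ℤ) ∣ Qm m) ↔ m % 12 = 1) ∧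
    (((X ^ 6 - X ^ 3 + 1 : Polynomial ℤ) ∣ Qm m) ↔ m % 18 = 17) ∧
    (((X ^ 8 + X ^ 7 - X ^ 5 - X ^ 4 - X ^ 3 + X + 1 : Polynomial ℤ) ∣ Qm m) ↔ m % 30 = 24)
    := by
  refine ⟨?_, ?_, ?_, ?_, ?_⟩
  · refine main_part 2 1 0 (by norm_num) _ ⟨X - 1, by ring⟩ ⟨-X, by rw [Pr]; ring⟩ ?_ m (by omega)
    intro r hr hne
    interval_cases r
    · exact absurd rfl hne
    · intro h
      have h2 := Polynomial.eval_dvd (x := (2:ℤ)) h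
      norm_num [Pr] at h2
  · refine main_part 8 2 7 (by norm_num) _ ⟨X ^ 4 - 1, by ring⟩
      ⟨1 - X ^ 2 - X ^ 3 - X ^ 4 + X ^ 6, by rw [Pr]; ring⟩ ?_ m (by omega)
    intro r hr hne
    interval_cases r <;>
      first
        | exact absurd rfl hne
        | · intro h
            have h2 := Polynomial.eval_dvd (x := (2:ℤ)) h
            norm_num [Pr] at h2
  · refine main_part 12 1 10 (by norm_num) _ ⟨-1 - X ^ 2 + X ^ 6 + X ^ 8, by ring⟩
      ⟨1 - X ^ 3 - X ^ 4 - X ^ 5 - X ^ 6 + X ^ 9, by rw [Pr]; ring⟩ ?_ m (by omega)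
    intro r hr hne
    interval_cases r <;>
      first
        | exact absurd rfl hne
        | · intro h
            have h2 := Polynomial.eval_dvd (x := (2:ℤ)) h
            norm_num [Pr] at h2
  · refine main_part 18 17 14 (by norm_num) _ ⟨-1 - X ^ 3 + X ^ 9 + X ^ 12, by ring⟩
      ⟨1 - X ^ 2 - X ^ 5 - X ^ 6 - X ^ 9 + X ^ 11, by rw [Pr]; ring⟩ ?_ m (by omega)
    intro r hr hne
    interval_cases r <;>
      first
        | exact absurd rfl hne
        | · intro h
            have h2 := Polynomial.eval_dvd (x := (2:ℤ)) h
            norm_num [Pr] at h2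
  · refine main_part 30 24 21 (by norm_num) _
      ⟨-1 + X - X ^ 2 - X ^ 5 + X ^ 6 - X ^ 7 + X ^ 15 - X ^ 16 + X ^ 17 + X ^ 20 - X ^ 21 + X ^ 22,
        by ring⟩
      ⟨1 - X - X ^ 6 - X ^ 10 - X ^ 15 + X ^ 16, by rw [Pr]; ring⟩ ?_ m (by omega)
    intro r hr hne
    interval_cases r <;>
      first
        | exact absurd rfl hne
        | · intro h
            have h2 := Polynomial.eval_dvd (x := (2:ℤ)) h
            norm_num [Pr] at h2
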